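/- For the three-node example (nodes of capacity 3, flows of rate 2 with paths {v₁,v₂}, {v₂,v₃}, {v₁,v₃}), the optimal-allocation value function J₃ is 2/3-weakly submodular but not γ-weakly submodular for any γ > 2/3, where γ-weak submodularity requires Σ_{v ∈ B} (J₃(A ∪ {v}) − J₃(A)) ≥ γ (J₃(A ∪ B) − J₃(A)) for all disjoint A, B. -/

import Mathlib

/-- The optimal-allocation value function `J₃`: maximum total rate of fully
processed flows, over capacity-feasible assignments to VNF-nodes in `U`. -/
noncomputable def J3 {V F : Type} [Fintype V] [Fintype F] [DecidableEq V]
    (c : V → ℝ) (rate : F → ℝ) (path : F → Finset V) (U : Finset V) : ℝ :=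
  sSup {x : ℝ | ∃ a : F → V → ℝ,
    (∀ f v, 0 ≤ a f v) ∧
    (∀ f v, v ∉ path f ∩ U → a f v = 0) ∧
    (∀ v ∈ U, ∑ f, a f v ≤ c v) ∧
    x = ∑ f, if rate f ≤ ∑ v ∈ path f ∩ U, a f v then rate f else 0}

namespace J3Aux

def c3 : Fin 3 → ℝ := fun _ => 3
def r3 : Fin 3 → ℝ := fun _ => 2
def p3 : Fin 3 → Finset (Fin 3) := ![{0, 1}, {1, 2}, {0, 2}]

def S (U : Finset (Fin 3)) : Set ℝ :=
  {x : ℝ | ∃ a : Fin 3 → Fin 3 → ℝ,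
    (∀ f v, 0 ≤ a f v) ∧
    (∀ f v, v ∉ p3 f ∩ U → a f v = 0) ∧
    (∀ v ∈ U, ∑ f, a f v ≤ c3 v) ∧
    x = ∑ f, if r3 f ≤ ∑ v ∈ p3 f ∩ U, a f v then r3 f else 0}

lemma J3_eq (U : Finset (Fin 3)) (t : ℝ) (h : IsGreatest (S U) t) :
    J3 c3 r3 p3 U = t := h.csSup_eq

lemma ub6 (U : Finset (Fin 3)) : ∀ x ∈ S U, x ≤ 6 := by
  rintro x ⟨a, h0, h1, h2, hx⟩
  rw [hx, Fin.sum_univ_three]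
  have : ∀ f : Fin 3, (if r3 f ≤ ∑ v ∈ p3 f ∩ U, a f v then r3 f else 0) ≤ 2 := by
    intro f; split <;> norm_num [r3]
  linarith [this 0, this 1, this 2]

lemma val_empty : J3 c3 r3 p3 ∅ = 0 := by
  apply J3_eq
  constructor
  · exact ⟨fun _ _ => 0, fun _ _ => le_refl 0, fun _ _ _ => rfl, by simp,
      by norm_num [r3]⟩
  · rintro x ⟨a, h0, h1, h2, hx⟩
    rw [hx]; norm_num [r3]

/-- Value at a singleton, parameterized by the node `w` and the two flows
`g₁ g₂` through it (the remaining flow is `g₃`). -/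
lemma val_single (w g1 g2 g3 : Fin 3)
    (e1 : p3 g1 ∩ ({w} : Finset (Fin 3)) = {w})
    (e2 : p3 g2 ∩ ({w} : Finset (Fin 3)) = {w})
    (e3 : p3 g3 ∩ ({w} : Finset (Fin 3)) = ∅)
    (h12 : g1 ≠ g2) (h13 : g1 ≠ g3) (h23 : g2 ≠ g3)
    (hg : ({g1, g2, g3} : Finset (Fin 3)) = Finset.univ) :
    J3 c3 r3 p3 {w} = 2 := by
  have hgs : ∀ f : Fin 3, f = g1 ∨ f = g2 ∨ f = g3 := by
    intro f
    have : f ∈ ({g1, g2, g3} : Finset (Fin 3)) := hg ▸ Finset.mem_univ f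
    simpa using this
  apply J3_eq
  constructor
  · refine ⟨fun f v => if f = g1 ∧ v = w then 2 else 0, ?_, ?_, ?_, ?_⟩
    · intro f v; dsimp only; split <;> norm_num
    · intro f v h; dsimp only; rw [if_neg]; rintro ⟨rfl, rfl⟩
      rw [e1] at h; simp at h
    · intro v hv
      rw [Finset.mem_singleton] at hv
      rw [hv]
      have hs : (∑ f : Fin 3, if f = g1 ∧ w = w then (2:ℝ) else 0) = 2 := by
        simp
      rw [hs]
      norm_num [c3]
    · have key : ∀ f : Fin 3,
        (if r3 f ≤ ∑ v ∈ p3 f ∩ ({w} : Finset (Fin 3)),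
            (if f = g1 ∧ v = w then (2:ℝ) else 0) then r3 f else 0) =
          if f = g1 then 2 else 0 := by
        intro f
        obtain hf | hf | hf := hgs f <;> subst hf
        · rw [e1, Finset.sum_singleton]
          simp [r3]
        · rw [e2, Finset.sum_singleton]
          norm_num [r3, (Ne.symm h12)]
        · rw [e3, Finset.sum_empty]
          norm_num [r3, (Ne.symm h13)]
      rw [Finset.sum_congr rfl (fun f _ => key f)]
      simp
  · rintro x ⟨a, h0, h1, h2, hx⟩
    have hc := h2 w (by simp)
    have hsum : ∑ f : Fin 3, a f w = a g1 w + a g2 w + a g3 w := by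
      rw [← hg, Finset.sum_insert (by simp [h12, h13]),
        Finset.sum_insert (by simp [h23]), Finset.sum_singleton]
      ring
    rw [hsum] at hc
    have key : x = (if (2:ℝ) ≤ a g1 w then 2 else 0)
        + (if (2:ℝ) ≤ a g2 w then 2 else 0) := by
      rw [hx, ← hg, Finset.sum_insert (by simp [h12, h13]),
        Finset.sum_insert (by simp [h23]), Finset.sum_singleton,
        e1, e2, e3, Finset.sum_singleton, Finset.sum_singleton, Finset.sum_empty]
      norm_num [r3]
      congr 1 <;> exact if_congr (by norm_num) rfl rfl
    norm_num [c3] at hc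
    rw [key]
    split_ifs <;> push_cast <;> linarith [h0 g1 w, h0 g2 w, h0 g3 w]

lemma val0 : J3 c3 r3 p3 {0} = 2 :=
  val_single 0 0 2 1 (by decide) (by decide) (by decide)
    (by decide) (by decide) (by decide) (by decide)
lemma val1 : J3 c3 r3 p3 {1} = 2 :=
  val_single 1 0 1 2 (by decide) (by decide) (by decide)
    (by decide) (by decide) (by decide) (by decide)
lemma val2 : J3 c3 r3 p3 {2} = 2 :=
  val_single 2 1 2 0 (by decide) (by decide) (by decide)
    (by decide) (by decide) (by decide) (by decide)

/-- Generic "value 6" lemma given an explicit feasible allocation. -/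
lemma val_six (U : Finset (Fin 3)) (a : Fin 3 → Fin 3 → ℝ)
    (h0 : ∀ f v, 0 ≤ a f v)
    (h1 : ∀ f v, v ∉ p3 f ∩ U → a f v = 0)
    (h2 : ∀ v ∈ U, ∑ f, a f v ≤ c3 v)
    (h3 : (6:ℝ) = ∑ f, if r3 f ≤ ∑ v ∈ p3 f ∩ U, a f v then r3 f else 0) :
    J3 c3 r3 p3 U = 6 :=
  J3_eq U 6 ⟨⟨a, h0, h1, h2, h3⟩, ub6 U⟩

lemma val01 : J3 c3 r3 p3 {0, 1} = 6 := by
  apply val_six _ ![![1,1,0],![0,2,0],![2,0,0]]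
  · intro f v; fin_cases f <;> fin_cases v <;> norm_num
  · intro f v h
    fin_cases f <;> fin_cases v <;> first | rfl | exact absurd (by decide) h
  · intro v hv
    fin_cases hv <;>
      norm_num [Fin.sum_univ_three, c3, Matrix.cons_val_zero, Matrix.cons_val_one,
        Matrix.head_cons, Matrix.cons_val_two, Matrix.tail_cons, Matrix.vecHead, Matrix.vecTail]
  · have e0 : p3 0 ∩ ({0,1} : Finset (Fin 3)) = {0,1} := by decide
    have e1 : p3 1 ∩ ({0,1} : Finset (Fin 3)) = {1} := by decide
    have e2 : p3 2 ∩ ({0,1} : Finset (Fin 3)) = {0} := by decide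
    rw [Fin.sum_univ_three, e0, e1, e2, Finset.sum_pair (by decide : (0:Fin 3) ≠ 1),
      Finset.sum_singleton, Finset.sum_singleton]
    norm_num [r3, Matrix.cons_val_zero, Matrix.cons_val_one,
      Matrix.head_cons, Matrix.cons_val_two, Matrix.tail_cons, Matrix.vecHead, Matrix.vecTail]

lemma val12 : J3 c3 r3 p3 {1, 2} = 6 := by
  apply val_six _ ![![0,2,0],![0,1,1],![0,0,2]]
  · intro f v; fin_cases f <;> fin_cases v <;> norm_num
  · intro f v h
    fin_cases f <;> fin_cases v <;> first | rfl | exact absurd (by decide) h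
  · intro v hv
    fin_cases hv <;>
      norm_num [Fin.sum_univ_three, c3, Matrix.cons_val_zero, Matrix.cons_val_one,
        Matrix.head_cons, Matrix.cons_val_two, Matrix.tail_cons, Matrix.vecHead, Matrix.vecTail]
  · have e0 : p3 0 ∩ ({1,2} : Finset (Fin 3)) = {1} := by decide
    have e1 : p3 1 ∩ ({1,2} : Finset (Fin 3)) = {1,2} := by decide
    have e2 : p3 2 ∩ ({1,2} : Finset (Fin 3)) = {2} := by decide
    rw [Fin.sum_univ_three, e0, e1, e2, Finset.sum_pair (by decide : (1:Fin 3) ≠ 2),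
      Finset.sum_singleton, Finset.sum_singleton]
    norm_num [r3, Matrix.cons_val_zero, Matrix.cons_val_one,
      Matrix.head_cons, Matrix.cons_val_two, Matrix.tail_cons, Matrix.vecHead, Matrix.vecTail]

lemma val02 : J3 c3 r3 p3 {0, 2} = 6 := by
  apply val_six _ ![![2,0,0],![0,0,2],![1,0,1]]
  · intro f v; fin_cases f <;> fin_cases v <;> norm_num
  · intro f v h
    fin_cases f <;> fin_cases v <;> first | rfl | exact absurd (by decide) h
  · intro v hv
    fin_cases hv <;>
      norm_num [Fin.sum_univ_three, c3, Matrix.cons_val_zero, Matrix.cons_val_one,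
        Matrix.head_cons, Matrix.cons_val_two, Matrix.tail_cons, Matrix.vecHead, Matrix.vecTail]
  · have e0 : p3 0 ∩ ({0,2} : Finset (Fin 3)) = {0} := by decide
    have e1 : p3 1 ∩ ({0,2} : Finset (Fin 3)) = {2} := by decide
    have e2 : p3 2 ∩ ({0,2} : Finset (Fin 3)) = {0,2} := by decide
    rw [Fin.sum_univ_three, e0, e1, e2, Finset.sum_pair (by decide : (0:Fin 3) ≠ 2),
      Finset.sum_singleton, Finset.sum_singleton]
    norm_num [r3, Matrix.cons_val_zero, Matrix.cons_val_one,
      Matrix.head_cons, Matrix.cons_val_two, Matrix.tail_cons, Matrix.vecHead, Matrix.vecTail]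

lemma val012 : J3 c3 r3 p3 {0, 1, 2} = 6 := by
  apply val_six _ ![![2,0,0],![0,2,0],![0,0,2]]
  · intro f v; fin_cases f <;> fin_cases v <;> norm_num
  · intro f v h
    fin_cases f <;> fin_cases v <;> first | rfl | exact absurd (by decide) h
  · intro v hv
    fin_cases hv <;>
      norm_num [Fin.sum_univ_three, c3, Matrix.cons_val_zero, Matrix.cons_val_one,
        Matrix.head_cons, Matrix.cons_val_two, Matrix.tail_cons, Matrix.vecHead, Matrix.vecTail]
  · have e0 : p3 0 ∩ ({0,1,2} : Finset (Fin 3)) = {0,1} := by decide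
    have e1 : p3 1 ∩ ({0,1,2} : Finset (Fin 3)) = {1,2} := by decide
    have e2 : p3 2 ∩ ({0,1,2} : Finset (Fin 3)) = {0,2} := by decide
    rw [Fin.sum_univ_three, e0, e1, e2,
      Finset.sum_pair (by decide : (0:Fin 3) ≠ 1),
      Finset.sum_pair (by decide : (1:Fin 3) ≠ 2),
      Finset.sum_pair (by decide : (0:Fin 3) ≠ 2)]
    norm_num [r3, Matrix.cons_val_zero, Matrix.cons_val_one,
      Matrix.head_cons, Matrix.cons_val_two, Matrix.tail_cons, Matrix.vecHead, Matrix.vecTail]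

def jval : ℕ → ℝ
  | 0 => 0
  | 1 => 2
  | _ => 6

lemma J3_card (U : Finset (Fin 3)) : J3 c3 r3 p3 U = jval U.card := by
  have hU : ∀ W : Finset (Fin 3), W = ∅ ∨ W = {0} ∨ W = {1} ∨ W = {2} ∨ W = {0,1} ∨
      W = {0,2} ∨ W = {1,2} ∨ W = {0,1,2} := by decide
  rcases hU U with rfl | rfl | rfl | rfl | rfl | rfl | rfl | rfl <;>
    simp [val_empty, val0, val1, val2, val01, val02, val12, val012, jval]

lemma numeric : ∀ a b : ℕ, a + b ≤ 3 →
    (2/3 : ℝ) * (jval (a + b) - jval a) ≤ (b : ℝ) * (jval (a + 1) - jval a) := by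
  intro a b h
  have ha : a ≤ 3 := by omega
  have hb : b ≤ 3 := by omega
  interval_cases a <;> interval_cases b <;> first | omega | norm_num [jval]

end J3Aux

/-- For the triangle instance (nodes of capacity 3, flows of rate 2 with paths
{v₁,v₂}, {v₂,v₃}, {v₁,v₃}), `J₃` is 2/3-weakly submodular but not γ-weakly
submodular for any γ > 2/3, where γ-weak submodularity requires
`Σ_{v ∈ B} (J₃(A ∪ {v}) − J₃(A)) ≥ γ (J₃(A ∪ B) − J₃(A))` for all
disjoint `A, B`. -/
theorem J3_weak_submodularity_two_thirds :
    let c : Fin 3 → ℝ := fun _ => 3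
    let rate : Fin 3 → ℝ := fun _ => 2
    let path : Fin 3 → Finset (Fin 3) := ![{0, 1}, {1, 2}, {0, 2}]
    let J : Finset (Fin 3) → ℝ := J3 c rate path
    (∀ A B : Finset (Fin 3), Disjoint A B →
      (2 / 3) * (J (A ∪ B) - J A) ≤ ∑ v ∈ B, (J (insert v A) - J A)) ∧
    (∀ γ : ℝ, γ > 2 / 3 →
      ¬ ∀ A B : Finset (Fin 3), Disjoint A B →
        γ * (J (A ∪ B) - J A) ≤ ∑ v ∈ B, (J (insert v A) - J A)) := by
  intro c rate path J
  have hJ : ∀ U : Finset (Fin 3), J U = J3Aux.jval U.card := fun U => J3Aux.J3_card U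
  constructor
  · intro A B hAB
    have hsum : ∑ v ∈ B, (J (insert v A) - J A) =
        (B.card : ℝ) * (J3Aux.jval (A.card + 1) - J3Aux.jval A.card) := by
      rw [Finset.sum_congr rfl (fun v hv => ?_), Finset.sum_const, nsmul_eq_mul]
      rw [hJ, hJ, Finset.card_insert_of_notMem (Finset.disjoint_right.mp hAB hv)]
    have hcard : A.card + B.card ≤ 3 := by
      have h := Finset.card_le_univ (A ∪ B)
      rwa [Finset.card_union_of_disjoint hAB, Fintype.card_fin] at h
    rw [hsum, hJ, hJ, Finset.card_union_of_disjoint hAB]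
    exact J3Aux.numeric A.card B.card hcard
  · intro γ hγ h
    have key := h ∅ {0, 1} (by simp)
    rw [Finset.sum_pair (by decide : (0 : Fin 3) ≠ 1), Finset.empty_union,
      show J ∅ = 0 from J3Aux.val_empty,
      show J {0, 1} = 6 from J3Aux.val01,
      show J (insert (0:Fin 3) ∅) = 2 from J3Aux.val0,
      show J (insert (1:Fin 3) ∅) = 2 from J3Aux.val1] at key
    norm_num at key
    linarith
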